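/- Let A be an n × n {0,1}-matrix, X_A the one-sided subshift with shift σ_A : X_A → X_A (here U = X_A, which is clopen, and σ_A(X_A) is open). Then there is a homeomorphism Φ : X̃_A → X̄_A from the σ_A-extension X̃_A of X_A onto the two-sided subshift X̄_A = {x ∈ {1,...,n}^ℤ : A(x_i, x_{i+1}) = 1 ∀ i} satisfying Φ ∘ σ̃_A = σ̄_A ∘ Φ. -/

import Mathlib

/-- The one-sided subshift of finite type of a `{0,1}`-matrix `A`. -/
def ShiftSpace (n : ℕ) (A : Fin n → Fin n → ℕ) : Set (ℕ → Fin n) :=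
  {x | ∀ i, A (x i) (x (i + 1)) = 1}

/-- The one-sided shift map on `X_A`. -/
def shiftMap (n : ℕ) (A : Fin n → Fin n → ℕ) :
    ShiftSpace n A → ShiftSpace n A :=
  fun x => ⟨fun i => x.1 (i + 1), fun i => x.2 (i + 1)⟩

/-- The two-sided subshift of finite type of `A`. -/
def TwoShiftSpace (n : ℕ) (A : Fin n → Fin n → ℕ) : Set (ℤ → Fin n) :=
  {x | ∀ i : ℤ, A (x i) (x (i + 1)) = 1}

/-- The two-sided shift map on `X̄_A`. -/
def twoShiftMap (n : ℕ) (A : Fin n → Fin n → ℕ) :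
    TwoShiftSpace n A → TwoShiftSpace n A :=
  fun x => ⟨fun i => x.1 (i + 1), fun i => x.2 (i + 1)⟩

/-- The `σ`-extension of a (globally defined) dynamical system `σ : X → X`, i.e.
the case `U = X` of the extension space `X̃`: sequences in `(X ⊔ {0})^ℕ` which are
either finite chains `(x₀,...,x_N,0,0,...)` with `σ(x_i) = x_{i-1}` and
`x_N ∉ σ(X)`, or infinite chains with `σ(x_i) = x_{i-1}` for all `i ≥ 1`. -/
def SigmaExtTotal {X : Type*} (σ : X → X) : Set (ℕ → X ⊕ Unit) :=
  {y | (∃ N : ℕ,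
          (∀ i : ℕ, 1 ≤ i → i ≤ N →
            ∃ u : X, y i = Sum.inl u ∧ y (i - 1) = Sum.inl (σ u)) ∧
          (∃ xN : X, y N = Sum.inl xN ∧ xN ∉ Set.range σ) ∧
          (∀ i : ℕ, N < i → y i = Sum.inr ()))
      ∨ (∀ i : ℕ, 1 ≤ i →
          ∃ u : X, y i = Sum.inl u ∧ y (i - 1) = Sum.inl (σ u))}

namespace SigmaExtAux

variable {n : ℕ} {A : Fin n → Fin n → ℕ}

lemma shiftMap_surjective (hcol : ∀ j : Fin n, ∃ i : Fin n, A i j = 1) :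
    Function.Surjective (shiftMap n A) := by
  intro x
  obtain ⟨j, hj⟩ := hcol (x.1 0)
  refine ⟨⟨fun i => Nat.casesOn i j fun m => x.1 m, ?_⟩, ?_⟩
  · intro i
    cases i with
    | zero => exact hj
    | succ m => exact x.2 m
  · exact Subtype.ext (funext fun i => rfl)

lemma mem_sigmaExtTotal_iff (hcol : ∀ j : Fin n, ∃ i : Fin n, A i j = 1)
    {y : ℕ → ShiftSpace n A ⊕ Unit} :
    y ∈ SigmaExtTotal (shiftMap n A) ↔
      ∃ f : ℕ → ShiftSpace n A, (∀ i, y i = Sum.inl (f i)) ∧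
        ∀ i, shiftMap n A (f (i + 1)) = f i := by
  constructor
  · rintro (⟨N, -, ⟨xN, -, hxN⟩, -⟩ | h)
    · exact absurd (shiftMap_surjective hcol xN) hxN
    · choose g hg1 hg2 using fun i => h (i + 1) (by omega)
      refine ⟨fun i => shiftMap n A (g i), fun i => by simpa using hg2 i, fun i => ?_⟩
      have h1 : (Sum.inl (g i) : ShiftSpace n A ⊕ Unit)
          = Sum.inl (shiftMap n A (g (i + 1))) := by
        rw [← hg1 i]; simpa using hg2 (i + 1)
      rw [Sum.inl.injEq] at h1
      exact congrArg (shiftMap n A) h1.symm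
  · rintro ⟨f, hyf, hchain⟩
    refine Or.inr fun i hi => ⟨f i, hyf i, ?_⟩
    obtain ⟨m, rfl⟩ : ∃ m, i = m + 1 := ⟨i - 1, by omega⟩
    rw [hchain m]
    simpa using hyf m

lemma chain_eval {f : ℕ → ShiftSpace n A}
    (hf : ∀ i, shiftMap n A (f (i + 1)) = f i) :
    ∀ d i m, (f (i + d)).1 (m + d) = (f i).1 m := by
  intro d
  induction d with
  | zero => intro i m; rfl
  | succ d ih =>
    intro i m
    have h := congrArg (fun z : ShiftSpace n A => z.1 (m + d)) (hf (i + d))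
    simp only [shiftMap] at h
    calc (f (i + (d + 1))).1 (m + (d + 1)) = (f (i + d)).1 (m + d) := h
      _ = (f i).1 m := ih i m

lemma chain_eval' {f : ℕ → ShiftSpace n A}
    (hf : ∀ i, shiftMap n A (f (i + 1)) = f i) {i j m m' : ℕ}
    (h : (m : ℤ) - i = (m' : ℤ) - j) : (f i).1 m = (f j).1 m' := by
  rcases le_total i j with hij | hij
  · obtain ⟨d, rfl⟩ := Nat.exists_eq_add_of_le hij
    obtain rfl : m' = m + d := by omega
    exact (chain_eval hf d i m).symm
  · obtain ⟨d, rfl⟩ := Nat.exists_eq_add_of_le hij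
    obtain rfl : m = m' + d := by omega
    exact chain_eval hf d j m'

end SigmaExtAux

/-- for the one-sided subshift `(X_A, σ_A)` (with `U = X_A` clopen and
`σ_A(X_A)` open; we assume every column of `A` is nonzero), the `σ_A`-extension
`X̃_A` is homeomorphic to the two-sided subshift `X̄_A` via a homeomorphism `Φ`
intertwining `σ̃_A` and `σ̄_A`: whenever `z = σ̃_A(y)` (that is, `z_{i+1} = y_i` and
`z_0 = σ_A(y_0)`), we have `Φ(z) = σ̄_A(Φ(y))`. -/
theorem sigmaExt_shiftSpace_homeomorph_twoShiftSpace (n : ℕ)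
    (A : Fin n → Fin n → ℕ) (hA : ∀ i j, A i j = 0 ∨ A i j = 1)
    (hcol : ∀ j : Fin n, ∃ i : Fin n, A i j = 1) :
    ∃ e : SigmaExtTotal (shiftMap n A) ≃ₜ TwoShiftSpace n A,
      ∀ y z : SigmaExtTotal (shiftMap n A),
        (∀ i : ℕ, z.1 (i + 1) = y.1 i) →
        (∀ x₀ : ShiftSpace n A, y.1 0 = Sum.inl x₀ →
          z.1 0 = Sum.inl (shiftMap n A x₀)) →
        e z = twoShiftMap n A (e y) := by
  classical
  rcases Nat.eq_zero_or_pos n with rfl | hn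
  · -- degenerate case: everything is empty
    have h1 : IsEmpty (ShiftSpace 0 A) := ⟨fun x => Fin.elim0 (x.1 0)⟩
    have h3 : IsEmpty (SigmaExtTotal (shiftMap 0 A)) := by
      refine ⟨fun y => ?_⟩
      rcases y.2 with ⟨N, -, ⟨xN, -, -⟩, -⟩ | h
      · exact h1.false xN
      · obtain ⟨u, -, -⟩ := h 1 le_rfl
        exact h1.false u
    have h2 : IsEmpty (TwoShiftSpace 0 A) := ⟨fun x => Fin.elim0 (x.1 0)⟩
    refine ⟨⟨@Equiv.equivOfIsEmpty _ _ h3 h2, ?_, ?_⟩, fun y => (h3.false y).elim⟩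
    · exact continuous_def.mpr fun s _ => by
        rw [Set.eq_empty_of_isEmpty (_ ⁻¹' s)]; exact isOpen_empty
    · exact continuous_def.mpr fun s _ => by
        rw [Set.eq_empty_of_isEmpty (_ ⁻¹' s)]; exact isOpen_empty
  · -- main case
    have hchar : ∀ y : SigmaExtTotal (shiftMap n A), ∃ f : ℕ → ShiftSpace n A,
        (∀ i, y.1 i = Sum.inl (f i)) ∧ ∀ i, shiftMap n A (f (i + 1)) = f i :=
      fun y => (SigmaExtAux.mem_sigmaExtTotal_iff hcol).1 y.2
    choose ch hch1 hch2 using hchar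
    -- the continuous underlying forward map
    set Fc : SigmaExtTotal (shiftMap n A) → ℤ → Fin n :=
      fun y k => Sum.elim (fun x : ShiftSpace n A => x.1 k.toNat)
        (fun _ => (⟨0, hn⟩ : Fin n)) (y.1 (-k).toNat) with hFc
    have hF : ∀ y k, Fc y k = (ch y (-k).toNat).1 k.toNat := by
      intro y k
      rw [hFc]
      simp only
      rw [hch1 y (-k).toNat]
      rfl
    have hΦmem : ∀ y, Fc y ∈ TwoShiftSpace n A := by
      intro y k
      rw [hF y k, hF y (k + 1),
        show (ch y (-(k+1)).toNat).1 (k+1).toNat = (ch y (-k).toNat).1 (k.toNat + 1) from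
          SigmaExtAux.chain_eval' (hch2 y) (by omega)]
      exact (ch y (-k).toNat).2 k.toNat
    set Φ : SigmaExtTotal (shiftMap n A) → TwoShiftSpace n A :=
      fun y => ⟨Fc y, hΦmem y⟩ with hΦ
    -- backward map
    have hΨmem : ∀ (x : TwoShiftSpace n A) (i : ℕ),
        (fun m : ℕ => x.1 ((m : ℤ) - i)) ∈ ShiftSpace n A := by
      intro x i m
      show A (x.1 ((m : ℤ) - i)) (x.1 (((m + 1 : ℕ) : ℤ) - i)) = 1
      have e : ((m + 1 : ℕ) : ℤ) - i = ((m : ℤ) - i) + 1 := by omega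
      rw [e]
      exact x.2 ((m : ℤ) - i)
    have hchainΨ : ∀ (x : TwoShiftSpace n A) (i : ℕ),
        shiftMap n A ⟨_, hΨmem x (i + 1)⟩ = (⟨_, hΨmem x i⟩ : ShiftSpace n A) := by
      intro x i
      apply Subtype.ext
      funext m
      show x.1 (((m + 1 : ℕ) : ℤ) - ((i + 1 : ℕ) : ℤ)) = x.1 ((m : ℤ) - i)
      rw [show ((m + 1 : ℕ) : ℤ) - ((i + 1 : ℕ) : ℤ) = (m : ℤ) - i by push_cast; ring]
    set Ψ : TwoShiftSpace n A → SigmaExtTotal (shiftMap n A) :=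
      fun x => ⟨fun i => Sum.inl ⟨_, hΨmem x i⟩,
        (SigmaExtAux.mem_sigmaExtTotal_iff hcol).2
          ⟨fun i => ⟨_, hΨmem x i⟩, fun i => rfl, hchainΨ x⟩⟩ with hΨ
    refine ⟨⟨⟨Φ, Ψ, ?_, ?_⟩, ?_, ?_⟩, ?_⟩
    · -- left inverse
      intro y
      apply Subtype.ext
      funext i
      show Sum.inl (⟨_, hΨmem (Φ y) i⟩ : ShiftSpace n A) = y.1 i
      rw [hch1 y i]
      congr 1
      apply Subtype.ext
      funext m
      show Fc y ((m : ℤ) - i) = (ch y i).1 m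
      rw [hF y ((m : ℤ) - i)]
      exact SigmaExtAux.chain_eval' (hch2 y) (by omega)
    · -- right inverse
      intro x
      apply Subtype.ext
      funext k
      show Fc (Ψ x) k = x.1 k
      have : Fc (Ψ x) k = x.1 ((k.toNat : ℤ) - ((-k).toNat : ℤ)) := rfl
      rw [this, show (k.toNat : ℤ) - ((-k).toNat : ℤ) = k by omega]
    · -- continuity of Φ
      apply Continuous.subtype_mk
      apply continuous_pi
      intro k
      exact (Continuous.sumElim
          ((continuous_apply k.toNat).comp continuous_subtype_val)
          continuous_const).comp
        ((continuous_apply ((-k).toNat)).comp continuous_subtype_val)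
    · -- continuity of Ψ
      apply Continuous.subtype_mk
      apply continuous_pi
      intro i
      apply Continuous.comp continuous_inl
      apply Continuous.subtype_mk
      apply continuous_pi
      intro m
      exact (continuous_apply ((m : ℤ) - (i : ℤ))).comp continuous_subtype_val
    · -- conjugacy
      intro y z h1 _
      have key : ∀ i, ch z i = shiftMap n A (ch y i) := by
        intro i
        have e1 : ch z (i + 1) = ch y i := by
          have := (hch1 z (i + 1)).symm.trans ((h1 i).trans (hch1 y i))
          exact Sum.inl_injective this
        rw [← hch2 z i, e1]
      apply Subtype.ext
      funext k
      show Fc z k = Fc y (k + 1)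
      rw [hF z k, hF y (k + 1), key ((-k).toNat)]
      show (ch y (-k).toNat).1 (k.toNat + 1) = _
      exact SigmaExtAux.chain_eval' (hch2 y) (by omega)
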